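/- Let η : X → Δ_m be the true class-probability function for distribution D and η̂ : X → Δ_m an estimate. Let β ∈ R_+^m with ‖β‖_2 ≤ 1 define the linear metric E[h] = Σ_i β_i E_x[η_i(x) h_i(x)], and let Ŵ_i(x) be weights satisfying |Ŵ_i(x) − β_i| ≤ κ for all i, x (with |β_i| ≤ 1). Then the plug-in classifier ĥ(x) ∈ argmax_i Ŵ_i(x) η̂_i(x) satisfies max_h E[h] − E[ĥ] ≤ (1 + κ)·E_x[‖η(x) − η̂(x)‖_1] + 2κ. -/

import Mathlib

open MeasureTheory Finset

lemma pointwise_bound {m : ℕ} (a b w c β : Fin m → ℝ) (κ : ℝ) (hκ : 0 ≤ κ)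
    (ha : ∀ i, 0 ≤ a i) (has : ∑ i, a i = 1)
    (hb : ∀ i, 0 ≤ b i)
    (hc : ∀ i, 0 ≤ c i) (hcs : ∑ i, c i = 1)
    (hβ1 : ∀ i, |β i| ≤ 1)
    (hw : ∀ i, |w i - β i| ≤ κ) (j : Fin m)
    (hj : ∀ i, w i * b i ≤ w j * b j) :
    ∑ i, β i * a i * c i - ∑ i, β i * a i * (if i = j then (1:ℝ) else 0)
      ≤ (1 + κ) * ∑ i, |a i - b i| + 2 * κ := by
  set g : Fin m → ℝ := fun i => c i - (if i = j then (1:ℝ) else 0) with hg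
  have hc1 : ∀ i, c i ≤ 1 := by
    intro i
    calc c i ≤ ∑ k, c k := Finset.single_le_sum (fun k _ => hc k) (mem_univ i)
    _ = 1 := hcs
  have hgabs : ∀ i, |g i| ≤ 1 := by
    intro i
    rw [abs_le]
    constructor <;> simp only [hg] <;> split <;> nlinarith [hc i, hc1 i]
  have hwabs : ∀ i, |w i| ≤ 1 + κ := by
    intro i
    calc |w i| = |(w i - β i) + β i| := by ring_nf
    _ ≤ |w i - β i| + |β i| := abs_add_le _ _
    _ ≤ κ + 1 := add_le_add (hw i) (hβ1 i)
    _ = 1 + κ := by ring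
  have hsplit : ∑ i, β i * a i * c i - ∑ i, β i * a i * (if i = j then (1:ℝ) else 0)
      = (∑ i, (β i - w i) * a i * g i) + (∑ i, w i * (a i - b i) * g i)
        + (∑ i, w i * b i * g i) := by
    rw [← Finset.sum_sub_distrib, ← Finset.sum_add_distrib, ← Finset.sum_add_distrib]
    apply Finset.sum_congr rfl
    intro i _
    simp only [hg]
    ring
  have hT1 : ∑ i, (β i - w i) * a i * g i ≤ κ := by
    calc ∑ i, (β i - w i) * a i * g i ≤ ∑ i, κ * a i := by
          apply Finset.sum_le_sum
          intro i _
          calc (β i - w i) * a i * g i ≤ |(β i - w i) * a i * g i| := le_abs_self _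
          _ = |β i - w i| * |a i| * |g i| := by rw [abs_mul, abs_mul]
          _ ≤ κ * |a i| * 1 := by
              apply mul_le_mul (mul_le_mul_of_nonneg_right _ (abs_nonneg _)) (hgabs i)
                (abs_nonneg _) (by positivity)
              · rw [abs_sub_comm]; exact hw i
          _ = κ * a i := by rw [mul_one, abs_of_nonneg (ha i)]
    _ = κ := by rw [← Finset.mul_sum, has, mul_one]
  have hT2 : ∑ i, w i * (a i - b i) * g i ≤ (1 + κ) * ∑ i, |a i - b i| := by
    rw [Finset.mul_sum]
    apply Finset.sum_le_sum
    intro i _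
    calc w i * (a i - b i) * g i ≤ |w i * (a i - b i) * g i| := le_abs_self _
    _ = |w i| * |a i - b i| * |g i| := by rw [abs_mul, abs_mul]
    _ ≤ (1 + κ) * |a i - b i| * 1 :=
        mul_le_mul (mul_le_mul_of_nonneg_right (hwabs i) (abs_nonneg _)) (hgabs i)
          (abs_nonneg _) (by positivity)
    _ = (1 + κ) * |a i - b i| := mul_one _
  have hT3 : ∑ i, w i * b i * g i ≤ 0 := by
    have h1 : ∑ i, w i * b i * (if i = j then (1:ℝ) else 0) = w j * b j := by
      simp [mul_ite]
    have h2 : ∑ i, w i * b i * c i ≤ w j * b j := by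
      calc ∑ i, w i * b i * c i ≤ ∑ i, (w j * b j) * c i := by
            apply Finset.sum_le_sum
            intro i _
            exact mul_le_mul_of_nonneg_right (hj i) (hc i)
      _ = w j * b j := by rw [← Finset.mul_sum, hcs, mul_one]
    have : ∑ i, w i * b i * g i
        = ∑ i, w i * b i * c i - ∑ i, w i * b i * (if i = j then (1:ℝ) else 0) := by
      rw [← Finset.sum_sub_distrib]
      exact Finset.sum_congr rfl (fun i _ => by simp only [hg]; ring)
    rw [this, h1]
    linarith
  rw [hsplit]
  have hgap : 0 ≤ ∑ i, |a i - b i| := Finset.sum_nonneg (fun i _ => abs_nonneg _)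
  linarith

/-- Simplified PI-EW regret bound: the plug-in classifier built from approximate weights
`Ŵ` (with `|Ŵ_i(x) − β_i| ≤ κ`) and an estimate `η̂` of `η` has regret at most
`(1+κ)·E_x[‖η − η̂‖₁] + 2κ` for the linear metric with coefficients `β`. -/
theorem pi_ew_regret_bound
    {X : Type*} [MeasurableSpace X] {m : ℕ}
    (ν : Measure X) [IsProbabilityMeasure ν]
    (η ηhat : X → Fin m → ℝ)
    (hη : ∀ x i, 0 ≤ η x i) (hηs : ∀ x, ∑ i, η x i = 1)
    (hηhat : ∀ x i, 0 ≤ ηhat x i) (hηhats : ∀ x, ∑ i, ηhat x i = 1)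
    (β : Fin m → ℝ) (hβ0 : ∀ i, 0 ≤ β i) (hβ1 : ∀ i, |β i| ≤ 1)
    (hβ2 : Real.sqrt (∑ i, β i ^ 2) ≤ 1)
    (κ : ℝ) (hκ : 0 ≤ κ)
    (What : X → Fin m → ℝ) (hWhat : ∀ x i, |What x i - β i| ≤ κ)
    (hhat : X → Fin m)
    (hargmax : ∀ x i, What x i * ηhat x i ≤ What x (hhat x) * ηhat x (hhat x))
    (hintopt : Integrable (fun x => ∑ i, β i * η x i *
        (if i = hhat x then (1:ℝ) else 0)) ν)
    (hintgap : Integrable (fun x => ∑ i, |η x i - ηhat x i|) ν) :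
    ∀ h : X → Fin m → ℝ,
      (∀ x i, 0 ≤ h x i) → (∀ x, ∑ i, h x i = 1) →
      Integrable (fun x => ∑ i, β i * η x i * h x i) ν →
      (∫ x, ∑ i, β i * η x i * h x i ∂ν)
          - (∫ x, ∑ i, β i * η x i * (if i = hhat x then (1:ℝ) else 0) ∂ν)
        ≤ (1 + κ) * (∫ x, ∑ i, |η x i - ηhat x i| ∂ν) + 2 * κ := by
  intro h hh0 hhs hintf
  have key : ∀ x, (∑ i, β i * η x i * h x i)
      - (∑ i, β i * η x i * (if i = hhat x then (1:ℝ) else 0))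
      ≤ (1 + κ) * (∑ i, |η x i - ηhat x i|) + 2 * κ := fun x =>
    pointwise_bound (η x) (ηhat x) (What x) (h x) β κ hκ (hη x) (hηs x) (hηhat x)
      (hh0 x) (hhs x) hβ1 (hWhat x) (hhat x) (hargmax x)
  have hRHSint : Integrable (fun x => (1 + κ) * (∑ i, |η x i - ηhat x i|) + 2 * κ) ν :=
    (hintgap.const_mul (1 + κ)).add (integrable_const (2 * κ))
  calc (∫ x, ∑ i, β i * η x i * h x i ∂ν)
        - (∫ x, ∑ i, β i * η x i * (if i = hhat x then (1:ℝ) else 0) ∂ν)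
      = ∫ x, ((∑ i, β i * η x i * h x i)
        - (∑ i, β i * η x i * (if i = hhat x then (1:ℝ) else 0))) ∂ν :=
        (integral_sub hintf hintopt).symm
    _ ≤ ∫ x, ((1 + κ) * (∑ i, |η x i - ηhat x i|) + 2 * κ) ∂ν :=
        integral_mono (hintf.sub hintopt) hRHSint key
    _ = (1 + κ) * (∫ x, ∑ i, |η x i - ηhat x i| ∂ν) + 2 * κ := by
        rw [integral_add (hintgap.const_mul (1 + κ)) (integrable_const (2 * κ)),
          MeasureTheory.integral_const_mul, integral_const, probReal_univ]
        simp
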